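/- Let Q be the quadrilateral with vertices (0,0), (1,0), (0,1), (s,t), where s > 0, t > 0, s + t > 1, s ≠ 1, t ≠ 1. Set L(h) = (1/2)(s - t + 2h(t-1))/(s-1), A = 4(s-1)^2 L(h)^2, B = 4(s-1)^2 h^2, and C = -2(s-1)(2(t-1)h^2 + (s-t+2)h - s). Then AB - C^2 = 4(2h-1)(s-1)^2(s-2h)(2(t-1)h + s), and this quantity is positive for all h strictly between 1/2 and s/2. -/
import Mathlib


theorem stmt_5 (s t h : ℝ) (hs : 0 < s) (ht : 0 < t) (hst : 1 < s + t)
    (hs1 : s ≠ 1) (ht1 : t ≠ 1)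
    (L A B C : ℝ)
    (hL : L = (1/2)*(s - t + 2*h*(t-1))/(s-1))
    (hA : A = 4*(s-1)^2*L^2)
    (hB : B = 4*(s-1)^2*h^2)
    (hC : C = -2*(s-1)*(2*(t-1)*h^2 + (s-t+2)*h - s)) :
    A*B - C^2 = 4*(2*h-1)*(s-1)^2*(s-2*h)*(2*(t-1)*h + s) ∧
    (((1 < s ∧ 1/2 < h ∧ h < s/2) ∨ (s < 1 ∧ s/2 < h ∧ h < 1/2)) →
      0 < A*B - C^2) := by
  have hs1' : s - 1 ≠ 0 := sub_ne_zero.mpr hs1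
  subst hL hA hB hC
  constructor
  · field_simp
    ring
  · rintro (⟨h1, h2, h3⟩ | ⟨h1, h2, h3⟩) <;>
    · have key : 0 < 2*(t-1)*h + s := by nlinarith [mul_pos hs ht]
      have hsq : 0 < (s-1)^2 := by positivity
      have hprod : 0 < (2*h-1)*(s-2*h) := by nlinarith
      have : 0 < 4*(2*h-1)*(s-1)^2*(s-2*h)*(2*(t-1)*h + s) := by
        have := mul_pos (mul_pos hprod hsq) key
        nlinarith [this]
      calc (0:ℝ) < _ := this
        _ = _ := by field_simp; ring
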